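/- Let K ≥ 0, let g_0, …, g_K be pairwise distinct positive real numbers, and let β_0, …, β_K be real numbers not all zero. Then the function h : ℝ → ℝ defined by h(x) = ∑_{ℓ=0}^{K} β_ℓ g_ℓ^x has at most K real zeros. -/

import Mathlib

open Real Finset

/-- Rolle's theorem, counting version: if a differentiable function vanishes on a
finite set `s`, then its derivative vanishes on a finite set of cardinality
at least `s.card - 1`. -/
lemma rolle_card {f : ℝ → ℝ} (hf : Differentiable ℝ f) (s : Finset ℝ)
    (hs : ∀ x ∈ s, f x = 0) :
    ∃ t : Finset ℝ, (∀ x ∈ t, deriv f x = 0) ∧ s.card ≤ t.card + 1 := by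
  rcases Nat.eq_zero_or_eq_succ_pred s.card with h0 | hm
  · exact ⟨∅, by simp, by omega⟩
  set m := s.card - 1
  have hcard : s.card = m + 1 := hm
  set E : Fin (m + 1) → ℝ := fun i => (s.orderIsoOfFin hcard i : ℝ) with hE
  have hEmono : StrictMono E := fun i j hij => by
    simpa [hE] using (s.orderIsoOfFin hcard).strictMono hij
  have hEmem : ∀ i, E i ∈ s := fun i => (s.orderIsoOfFin hcard i).2
  have hex : ∀ i : Fin m, ∃ y ∈ Set.Ioo (E i.castSucc) (E i.succ), deriv f y = 0 := by
    intro i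
    refine exists_deriv_eq_zero (hEmono (@Fin.castSucc_lt_succ _ i))
      hf.continuous.continuousOn ?_
    rw [hs _ (hEmem i.castSucc), hs _ (hEmem i.succ)]
  choose c hc hc0 using hex
  have hcmono : StrictMono c := by
    intro i j hij
    calc c i < E i.succ := (hc i).2
    _ ≤ E j.castSucc := hEmono.monotone (by
        simp [Fin.le_def]
        omega)
    _ < c j := (hc j).1
  refine ⟨Finset.image c Finset.univ, ?_, ?_⟩
  · intro x hx
    obtain ⟨i, _, rfl⟩ := Finset.mem_image.1 hx
    exact hc0 i
  · rw [Finset.card_image_of_injective _ hcmono.injective, Finset.card_univ,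
      Fintype.card_fin]
    omega

/-- Key induction: an exponential polynomial with `n + 1` terms has at most `n` zeros. -/
lemma exp_poly_aux : ∀ n : ℕ, ∀ g β : Fin (n + 1) → ℝ, Function.Injective g →
    (∀ ℓ, 0 < g ℓ) → (∃ ℓ, β ℓ ≠ 0) →
    ∀ s : Finset ℝ, (∀ x ∈ s, ∑ ℓ, β ℓ * g ℓ ^ x = 0) → s.card ≤ n := by
  intro n
  induction n with
  | zero =>
    rintro g β _ hgp ⟨ℓ, hβ⟩ s hs
    have hℓ0 : ℓ = 0 := Fin.fin_one_eq_zero ℓ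
    have : s = ∅ := by
      rw [Finset.eq_empty_iff_forall_notMem]
      intro x hx
      have h0 := hs x hx
      rw [Fin.sum_univ_one] at h0
      exact (mul_ne_zero (hℓ0 ▸ hβ) (Real.rpow_pos_of_pos (hgp 0) x).ne') h0
    simp [this]
  | succ n ih =>
    intro g β hg hgp hβ s hs
    set L : Fin (n + 2) := Fin.last (n + 1) with hL
    by_cases hb : ∀ ℓ, ℓ ≠ L → β ℓ = 0
    · have hβL : β L ≠ 0 := by
        obtain ⟨ℓ, hℓ⟩ := hβ
        by_cases h : ℓ = L
        · exact h ▸ hℓ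
        · exact absurd (hb ℓ h) hℓ
      have : s = ∅ := by
        rw [Finset.eq_empty_iff_forall_notMem]
        intro x hx
        have h0 := hs x hx
        rw [Finset.sum_eq_single L (fun b _ hbL => by rw [hb b hbL, zero_mul])
          (by simp)] at h0
        exact (mul_ne_zero hβL (Real.rpow_pos_of_pos (hgp L) x).ne') h0
      simp [this]
    · push_neg at hb
      obtain ⟨ℓ0, hℓ0ne, hℓ0⟩ := hb
      set c : Fin (n + 2) → ℝ := fun ℓ => g ℓ / g L with hc
      have hcpos : ∀ ℓ, 0 < c ℓ := fun ℓ => div_pos (hgp ℓ) (hgp L)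
      set f : ℝ → ℝ := fun x => ∑ ℓ, β ℓ * c ℓ ^ x with hfdef
      have hf' : ∀ x, HasDerivAt f (∑ ℓ, β ℓ * Real.log (c ℓ) * c ℓ ^ x) x := by
        intro x
        refine HasDerivAt.fun_sum fun ℓ _ => ?_
        have := ((Real.hasStrictDerivAt_const_rpow (hcpos ℓ) x).hasDerivAt).const_mul (β ℓ)
        rw [show β ℓ * Real.log (c ℓ) * c ℓ ^ x = β ℓ * (c ℓ ^ x * Real.log (c ℓ)) by ring]
        exact this
      have hfz : ∀ x ∈ s, f x = 0 := by
        intro x hx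
        have h0 := hs x hx
        have : f x = (∑ ℓ, β ℓ * g ℓ ^ x) / g L ^ x := by
          rw [Finset.sum_div]
          refine Finset.sum_congr rfl fun ℓ _ => ?_
          rw [hc, Real.div_rpow (hgp ℓ).le (hgp L).le, mul_div_assoc]
        rw [this, h0, zero_div]
      obtain ⟨t, ht0, hcardst⟩ :=
        rolle_card (fun x => (hf' x).differentiableAt) s hfz
      set g' : Fin (n + 1) → ℝ := fun ℓ => c ℓ.castSucc with hg'def
      set β' : Fin (n + 1) → ℝ := fun ℓ => β ℓ.castSucc * Real.log (c ℓ.castSucc)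
        with hβ'def
      have hcL : c L = 1 := div_self (hgp L).ne'
      have key : ∀ x ∈ t, ∑ ℓ, β' ℓ * g' ℓ ^ x = 0 := by
        intro x hx
        have h0 := ht0 x hx
        rw [(hf' x).deriv, Fin.sum_univ_castSucc] at h0
        have hcL' : c (Fin.last (n + 1)) = 1 := hcL
        simpa [hcL'] using h0
      have hg' : Function.Injective g' := by
        intro a b hab
        have : g a.castSucc = g b.castSucc := by
          have hab' : g a.castSucc / g L = g b.castSucc / g L := hab
          field_simp [(hgp L).ne'] at hab'
          exact hab'
        exact Fin.castSucc_injective _ (hg this)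
      have hβ' : ∃ ℓ, β' ℓ ≠ 0 := by
        obtain ⟨ℓ1, rfl⟩ := Fin.exists_castSucc_eq.2 hℓ0ne
        refine ⟨ℓ1, mul_ne_zero hℓ0 (Real.log_ne_zero_of_pos_of_ne_one
          (hcpos _) ?_)⟩
        rw [hc]
        intro hone
        exact hℓ0ne (hg (div_eq_one_iff_eq (hgp L).ne' |>.1 hone))
      have := ih g' β' hg' (fun ℓ => hcpos _) hβ' t key
      omega

theorem exponential_polynomial_zeros (K : ℕ) (g : Fin (K + 1) → ℝ)
    (hg_inj : Function.Injective g) (hg_pos : ∀ ℓ, 0 < g ℓ)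
    (β : Fin (K + 1) → ℝ) (hβ : ∃ ℓ, β ℓ ≠ 0)
    (h : ℝ → ℝ) (hh : ∀ x : ℝ, h x = ∑ ℓ, β ℓ * g ℓ ^ x) :
    ∀ s : Finset ℝ, (∀ x ∈ s, h x = 0) → s.card ≤ K := by
  intro s hs
  exact exp_poly_aux K g β hg_inj hg_pos hβ s fun x hx => (hh x) ▸ hs x hx
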